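/- Let (N_n)_{n≥0} with N_n = N_0^{(3/2)^n}, N_{-1} = 1, and let m_1^{(n)} be real constants (depending on tori i_1, i_2) with |m_1^{(n)}(i_1) - m_1^{(n)}(i_2)| ≤ C ε ||i_1 - i_2||. Define, for ȷ⃗ ∈ ℤ^ν, the sets T_{n+1}(2υ, τ)(i) = { (ω, γ) : |(ω - m_1^{(n)}(i) ȷ⃗)·ℓ| ≥ 2υ ⟨ℓ⟩^{-τ} for all 0 < |ℓ| ≤ N_n }. If C ε N_n^{τ+1} ||i_1 - i_2|| ≤ ρ with 0 < 2υ - ρ < 2υ < 1, then T_{n+1}(2υ, τ)(i_1) ⊆ T_{n+1}(2υ - ρ, τ)(i_2). -/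
import Mathlib


/-- Inclusion of the transport non-resonance Cantor-like sets for nearby approximate solutions:
if the constants `m₁ = m₁⁽ⁿ⁾(i₁)` and `m₂ = m₁⁽ⁿ⁾(i₂)` satisfy `|m₁ - m₂| ≤ C ε d` with
`d = ‖i₁ - i₂‖`, and `C ε N^{τ+1} d ≤ ρ` with `0 < 2υ - ρ < 2υ < 1`, then every `ω` satisfying
`|(ω - m₁ ȷ⃗)·ℓ| ≥ 2υ ⟨ℓ⟩^{-τ}` for all `0 < |ℓ| ≤ N` also satisfies
`|(ω - m₂ ȷ⃗)·ℓ| ≥ (2υ - ρ) ⟨ℓ⟩^{-τ}` for all `0 < |ℓ| ≤ N` (the constant `C` absorbs the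
size of `ȷ⃗`, encoded by `K`). -/
theorem cantor_set_inclusion (ν : ℕ) (jvec : Fin ν → ℤ)
    (τ υ ρ ε C K d N m₁ m₂ : ℝ)
    (hτ : 1 ≤ τ) (hN : 1 ≤ N)
    (hυ : 2 * υ < 1) (hρ : 0 < 2 * υ - ρ)
    (hd : 0 ≤ d)
    (hK : ∑ a, (|jvec a| : ℝ) ≤ K)
    (hLip : |m₁ - m₂| ≤ C * ε * d)
    (hsmall : K * (C * ε) * N ^ (τ + 1) * d ≤ ρ) :
    ∀ ω : Fin ν → ℝ,
      (∀ ℓ : Fin ν → ℤ, ℓ ≠ 0 → (∑ a, (|ℓ a| : ℝ)) ≤ N →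
        2 * υ * (max 1 (∑ a, (|ℓ a| : ℝ))) ^ (-τ)
          ≤ |∑ a, (ω a - m₁ * (jvec a : ℝ)) * (ℓ a : ℝ)|) →
      (∀ ℓ : Fin ν → ℤ, ℓ ≠ 0 → (∑ a, (|ℓ a| : ℝ)) ≤ N →
        (2 * υ - ρ) * (max 1 (∑ a, (|ℓ a| : ℝ))) ^ (-τ)
          ≤ |∑ a, (ω a - m₂ * (jvec a : ℝ)) * (ℓ a : ℝ)|) := by

  intro ω h1 ℓ hℓ hℓN
  set S := ∑ a, (|ℓ a| : ℝ) with hSdef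
  set L := max 1 S with hLdef
  have hL1 : (1:ℝ) ≤ L := le_max_left _ _
  have hL0 : (0:ℝ) < L := lt_of_lt_of_le one_pos hL1
  have hLN : L ≤ N := max_le hN hℓN
  have hN0 : (0:ℝ) < N := lt_of_lt_of_le one_pos hN
  have hCed : 0 ≤ C * ε * d := le_trans (abs_nonneg _) hLip
  have hK0 : 0 ≤ K :=
    le_trans (Finset.sum_nonneg fun a _ => by positivity) hK
  -- bound on |∑ j ℓ|
  have hla : ∀ a, |(ℓ a : ℝ)| ≤ N := by
    intro a
    refine le_trans ?_ hℓN
    exact Finset.single_le_sum (f := fun a => (|ℓ a| : ℝ))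
      (fun a _ => by positivity) (Finset.mem_univ a)
  have hjl : |∑ a, (jvec a : ℝ) * (ℓ a : ℝ)| ≤ K * N := by
    calc |∑ a, (jvec a : ℝ) * (ℓ a : ℝ)|
        ≤ ∑ a, |(jvec a : ℝ) * (ℓ a : ℝ)| := Finset.abs_sum_le_sum_abs _ _
      _ = ∑ a, |(jvec a : ℝ)| * |(ℓ a : ℝ)| := by simp [abs_mul]
      _ ≤ ∑ a, |(jvec a : ℝ)| * N := by
          refine Finset.sum_le_sum fun a _ => ?_
          exact mul_le_mul_of_nonneg_left (hla a) (abs_nonneg _)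
      _ = (∑ a, (|jvec a| : ℝ)) * N := by
          rw [Finset.sum_mul]
      _ ≤ K * N := mul_le_mul_of_nonneg_right hK (le_of_lt hN0)
  have hsum : (∑ a, (ω a - m₂ * (jvec a : ℝ)) * (ℓ a : ℝ))
      = (∑ a, (ω a - m₁ * (jvec a : ℝ)) * (ℓ a : ℝ))
        + (m₁ - m₂) * ∑ a, (jvec a : ℝ) * (ℓ a : ℝ) := by
    rw [Finset.mul_sum, ← Finset.sum_add_distrib]
    exact Finset.sum_congr rfl fun a _ => by ring
  have hpert : |(m₁ - m₂) * ∑ a, (jvec a : ℝ) * (ℓ a : ℝ)|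
      ≤ (C * ε * d) * (K * N) := by
    rw [abs_mul]
    exact mul_le_mul hLip hjl (abs_nonneg _) hCed
  -- key smallness inequality
  have hLτpos : (0:ℝ) < L ^ τ := Real.rpow_pos_of_pos hL0 _
  have hkey : (C * ε * d) * (K * N) ≤ ρ * L ^ (-τ) := by
    rw [Real.rpow_neg (le_of_lt hL0)]
    have hLτN : L ^ τ ≤ N ^ τ :=
      Real.rpow_le_rpow (le_of_lt hL0) hLN (le_trans zero_le_one hτ)
    have h1 : (C * ε * d) * (K * N) * L ^ τ ≤ ρ := by
      calc (C * ε * d) * (K * N) * L ^ τ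
          ≤ (C * ε * d) * (K * N) * N ^ τ := by
            refine mul_le_mul_of_nonneg_left hLτN ?_
            positivity
        _ = K * (C * ε) * N ^ (τ + 1) * d := by
            rw [Real.rpow_add hN0, Real.rpow_one]; ring
        _ ≤ ρ := hsmall
    calc (C * ε * d) * (K * N)
        = (C * ε * d) * (K * N) * L ^ τ * (L ^ τ)⁻¹ := by
          field_simp
      _ ≤ ρ * (L ^ τ)⁻¹ := by
          exact mul_le_mul_of_nonneg_right h1 (inv_nonneg.mpr (le_of_lt hLτpos))
  calc (2 * υ - ρ) * L ^ (-τ)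
      = 2 * υ * L ^ (-τ) - ρ * L ^ (-τ) := by ring
    _ ≤ |∑ a, (ω a - m₁ * (jvec a : ℝ)) * (ℓ a : ℝ)|
        - |(m₁ - m₂) * ∑ a, (jvec a : ℝ) * (ℓ a : ℝ)| := by
        refine sub_le_sub (h1 ℓ hℓ hℓN) (le_trans hpert hkey)
    _ ≤ |∑ a, (ω a - m₂ * (jvec a : ℝ)) * (ℓ a : ℝ)| := by
        rw [hsum]
        have := abs_sub_abs_le_abs_sub
          (∑ a, (ω a - m₁ * (jvec a : ℝ)) * (ℓ a : ℝ))
          (-((m₁ - m₂) * ∑ a, (jvec a : ℝ) * (ℓ a : ℝ)))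
        simpa [sub_neg_eq_add] using this
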